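/- Let P⊥ be an orthogonal projection matrix on ℝ^d, let b ∈ ℝ^d satisfy P⊥ b = b, let α ≠ 0 and σ > 0 be reals, and let μ be a probability measure on ℝ^d with ∫‖z‖ dμ(z) < ∞ such that P⊥ z = b for μ-almost every z. Define p(x) = ∫ φ_{σ²}(x − αz) dμ(z), where φ_{σ²} is the density of N(0, σ²I_d). Then p is positive and differentiable, and for all x ∈ ℝ^d, P⊥ · ∇ log p(x) = (α b − P⊥ x)/σ². -/

import Mathlib

open MeasureTheory Matrix

/-- Identify Euclidean space with the plain function type `ℝ^d`. -/
noncomputable def ofEuc {n : ℕ} (v : EuclideanSpace ℝ (Fin n)) : Fin n → ℝ :=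
  WithLp.equiv 2 (Fin n → ℝ) v

/-- The density of the Gaussian distribution `N(0, t I_d)` on `ℝ^d`. -/
noncomputable def gaussDensity (d : ℕ) (t : ℝ) (u : EuclideanSpace ℝ (Fin d)) : ℝ :=
  (2 * Real.pi * t) ^ (-(d : ℝ) / 2) * Real.exp (-‖u‖ ^ 2 / (2 * t))

section Aux

open InnerProductSpace

variable {d : ℕ} {t : ℝ}

lemma gauss_pos (ht : 0 < t) (u : EuclideanSpace ℝ (Fin d)) : 0 < gaussDensity d t u := by
  unfold gaussDensity
  positivity

lemma gauss_le (ht : 0 < t) (u : EuclideanSpace ℝ (Fin d)) :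
    gaussDensity d t u ≤ (2 * Real.pi * t) ^ (-(d : ℝ) / 2) := by
  unfold gaussDensity
  have h1 : (0:ℝ) < (2 * Real.pi * t) ^ (-(d : ℝ) / 2) := by positivity
  have h2 : Real.exp (-‖u‖ ^ 2 / (2 * t)) ≤ 1 := by
    rw [Real.exp_le_one_iff]
    have h3 : (0:ℝ) ≤ ‖u‖ ^ 2 := by positivity
    apply div_nonpos_of_nonpos_of_nonneg <;> linarith
  nlinarith

lemma norm_mul_gauss_le (ht : 0 < t) (u : EuclideanSpace ℝ (Fin d)) :
    ‖u‖ * gaussDensity d t u ≤ (2 * Real.pi * t) ^ (-(d : ℝ) / 2) * Real.sqrt t := by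
  unfold gaussDensity
  have h1 : (0:ℝ) < (2 * Real.pi * t) ^ (-(d : ℝ) / 2) := by positivity
  have key : ‖u‖ * Real.exp (-‖u‖ ^ 2 / (2 * t)) ≤ Real.sqrt t := by
    set s := ‖u‖ with hs
    have hs0 : 0 ≤ s := norm_nonneg u
    have hst : 0 < Real.sqrt t := Real.sqrt_pos.2 ht
    have hst2 : Real.sqrt t ^ 2 = t := Real.sq_sqrt ht.le
    have hexp : s ^ 2 / (2 * t) + 1 ≤ Real.exp (s ^ 2 / (2 * t)) := by
      have := Real.add_one_le_exp (s ^ 2 / (2 * t)); linarith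
    rw [neg_div, Real.exp_neg]
    rw [mul_inv_le_iff₀ (Real.exp_pos _)]
    have h2t : (0:ℝ) < 2 * t := by linarith
    calc s ≤ Real.sqrt t * (s ^ 2 / (2 * t) + 1) := by
            have heq : Real.sqrt t * (s ^ 2 / (2 * t) + 1)
                = Real.sqrt t * (s ^ 2 + 2 * t) / (2 * t) := by field_simp
            rw [heq, le_div_iff₀ h2t]
            nlinarith [mul_nonneg hst.le (sq_nonneg (s - Real.sqrt t)), hst2, hst.le]
      _ ≤ Real.sqrt t * Real.exp (s ^ 2 / (2 * t)) := by
            apply mul_le_mul_of_nonneg_left hexp hst.le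
  calc ‖u‖ * ((2 * Real.pi * t) ^ (-(d : ℝ) / 2) * Real.exp (-‖u‖ ^ 2 / (2 * t)))
      = (2 * Real.pi * t) ^ (-(d : ℝ) / 2) * (‖u‖ * Real.exp (-‖u‖ ^ 2 / (2 * t))) := by ring
    _ ≤ _ := mul_le_mul_of_nonneg_left key h1.le

lemma gauss_hasGradientAt (ht : 0 < t) (u : EuclideanSpace ℝ (Fin d)) :
    HasGradientAt (gaussDensity d t) (-(gaussDensity d t u / t) • u) u := by
  rw [hasGradientAt_iff_hasFDerivAt]
  have h1 : HasFDerivAt (fun u : EuclideanSpace ℝ (Fin d) => ‖u‖ ^ 2)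
      (2 • (innerSL ℝ u)) u := (hasStrictFDerivAt_norm_sq u).hasFDerivAt
  have h2 : HasFDerivAt (fun u : EuclideanSpace ℝ (Fin d) => -‖u‖ ^ 2 / (2 * t))
      ((-(2 * t)⁻¹ : ℝ) • (2 • (innerSL ℝ u))) u := by
    have := h1.const_smul (-(2 * t)⁻¹ : ℝ)
    refine this.congr_of_eventuallyEq (Filter.Eventually.of_forall fun v => ?_)
    simp only [Pi.smul_apply, smul_eq_mul]
    ring
  have h3 := h2.exp.const_mul ((2 * Real.pi * t) ^ (-(d : ℝ) / 2))
  refine h3.congr_fderiv ?_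
  ext v
  simp [gaussDensity, toDual_apply_apply, real_inner_smul_left, smul_eq_mul]
  ring

lemma gauss_continuous (ht : 0 < t) : Continuous (gaussDensity d t) := by
  unfold gaussDensity
  fun_prop

end Aux

/-- VP normal score: if `P⊥` is an orthogonal projection matrix,
`P⊥ b = b`, `α ≠ 0`, `σ > 0`, and `μ` is a probability measure with finite first
moment supported on `{z : P⊥ z = b}`, then `p(x) = ∫ φ_{σ²}(x − αz) dμ(z)` is
positive and differentiable and `P⊥ ∇ log p(x) = (α b − P⊥ x)/σ²`. -/
theorem stmt3 (d : ℕ) (Pperp : Matrix (Fin d) (Fin d) ℝ)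
    (hproj : Pperp * Pperp = Pperp) (hsymm : Pperpᵀ = Pperp)
    (b : Fin d → ℝ) (hb : Pperp.mulVec b = b)
    (α σ : ℝ) (hα : α ≠ 0) (hσ : 0 < σ)
    (μ : Measure (EuclideanSpace ℝ (Fin d))) [IsProbabilityMeasure μ]
    (hmom : Integrable (fun z => ‖z‖) μ)
    (hsupp : ∀ᵐ z ∂μ, Pperp.mulVec (ofEuc z) = b)
    (p : EuclideanSpace ℝ (Fin d) → ℝ)
    (hp : p = fun x => ∫ z, gaussDensity d (σ ^ 2) (x - α • z) ∂μ) :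
    (∀ x, 0 < p x) ∧ Differentiable ℝ p ∧
      ∀ x, Pperp.mulVec (ofEuc (gradient (fun y => Real.log (p y)) x))
        = (σ ^ 2)⁻¹ • (α • b - Pperp.mulVec (ofEuc x)) := by
  have ht : 0 < σ ^ 2 := by positivity
  set t := σ ^ 2 with htdef
  set c := (2 * Real.pi * t) ^ (-(d : ℝ) / 2) with hcdef
  have hc : 0 < c := by positivity
  have hcont := gauss_continuous (d := d) ht
  -- measurability and integrability of the integrand
  have hGmeas : ∀ x : EuclideanSpace ℝ (Fin d),
      AEStronglyMeasurable (fun z => gaussDensity d t (x - α • z)) μ := fun x =>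
    (hcont.comp (by fun_prop :
      Continuous fun z : EuclideanSpace ℝ (Fin d) => x - α • z)).aestronglyMeasurable
  have hGint : ∀ x : EuclideanSpace ℝ (Fin d),
      Integrable (fun z => gaussDensity d t (x - α • z)) μ := fun x =>
    (integrable_const c).mono' (hGmeas x) (Filter.Eventually.of_forall fun z => by
      rw [Real.norm_eq_abs, abs_of_pos (gauss_pos ht _)]; exact gauss_le ht _)
  -- positivity
  have hpos : ∀ x : EuclideanSpace ℝ (Fin d),
      0 < ∫ z, gaussDensity d t (x - α • z) ∂μ := fun x => by
    rw [integral_pos_iff_support_of_nonneg (fun z => (gauss_pos ht _).le) (hGint x)]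
    have hs : Function.support (fun z : EuclideanSpace ℝ (Fin d) =>
        gaussDensity d t (x - α • z)) = Set.univ :=
      Set.eq_univ_of_forall fun z => (gauss_pos ht _).ne'
    rw [hs, measure_univ]
    exact one_pos
  -- the pointwise derivative
  have hF : ∀ z x' : EuclideanSpace ℝ (Fin d),
      HasFDerivAt (fun x => gaussDensity d t (x - α • z))
        ((InnerProductSpace.toDual ℝ (EuclideanSpace ℝ (Fin d)))
          (-(gaussDensity d t (x' - α • z) / t) • (x' - α • z))) x' := by
    intro z x'
    have h0 := (gauss_hasGradientAt ht (x' - α • z)).hasFDerivAt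
    have h1 : HasFDerivAt (fun x : EuclideanSpace ℝ (Fin d) => x - α • z)
        (ContinuousLinearMap.id ℝ _) x' := (hasFDerivAt_id x').sub_const _
    simpa only [Function.comp_def, ContinuousLinearMap.comp_id] using h0.comp x' h1
  -- uniform bound on the derivative
  have hBnd : ∀ x z : EuclideanSpace ℝ (Fin d),
      ‖(-(gaussDensity d t (x - α • z) / t) : ℝ) • (x - α • z)‖ ≤ c * Real.sqrt t / t := by
    intro x z
    rw [norm_smul, Real.norm_eq_abs, abs_neg, abs_div, abs_of_pos (gauss_pos ht _),
      abs_of_pos ht]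
    have h := norm_mul_gauss_le ht (x - α • z)
    rw [div_mul_eq_mul_div, mul_comm (gaussDensity d t (x - α • z) : ℝ)]
    gcongr ?_ / t
  have hBnd' : ∀ x z : EuclideanSpace ℝ (Fin d),
      ‖(InnerProductSpace.toDual ℝ (EuclideanSpace ℝ (Fin d)))
        (-(gaussDensity d t (x - α • z) / t) • (x - α • z))‖ ≤ c * Real.sqrt t / t := by
    intro x z
    rw [LinearIsometryEquiv.norm_map]
    exact hBnd x z
  -- continuity of the derivative in z
  have hgcont : ∀ x : EuclideanSpace ℝ (Fin d),
      Continuous (fun z : EuclideanSpace ℝ (Fin d) =>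
        (-(gaussDensity d t (x - α • z) / t) : ℝ) • (x - α • z)) := by
    intro x
    apply Continuous.fun_smul
    · exact (((hcont.comp (by fun_prop :
        Continuous fun z : EuclideanSpace ℝ (Fin d) => x - α • z)).div_const t)).neg
    · fun_prop
  have hgint : ∀ x : EuclideanSpace ℝ (Fin d),
      Integrable (fun z => (-(gaussDensity d t (x - α • z) / t) : ℝ) • (x - α • z)) μ := by
    intro x
    exact (integrable_const (c * Real.sqrt t / t)).mono' (hgcont x).aestronglyMeasurable
      (Filter.Eventually.of_forall fun z => hBnd x z)
  -- differentiation under the integral sign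
  have hderiv : ∀ x : EuclideanSpace ℝ (Fin d),
      HasFDerivAt (fun x => ∫ z, gaussDensity d t (x - α • z) ∂μ)
        (∫ z, (InnerProductSpace.toDual ℝ (EuclideanSpace ℝ (Fin d)))
          (-(gaussDensity d t (x - α • z) / t) • (x - α • z)) ∂μ) x := by
    intro x
    apply hasFDerivAt_integral_of_dominated_of_fderiv_le
      (F' := fun x' z => (InnerProductSpace.toDual ℝ (EuclideanSpace ℝ (Fin d)))
        (-(gaussDensity d t (x' - α • z) / t) • (x' - α • z)))
      (bound := fun _ => c * Real.sqrt t / t) (s := Set.univ) Filter.univ_mem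
    · exact Filter.Eventually.of_forall fun x' => hGmeas x'
    · exact hGint x
    · exact (((InnerProductSpace.toDual ℝ
        (EuclideanSpace ℝ (Fin d))).continuous.comp (hgcont x)).aestronglyMeasurable)
    · exact Filter.Eventually.of_forall fun z x' _ => hBnd' x' z
    · exact integrable_const _
    · exact Filter.Eventually.of_forall fun z x' _ => hF z x'
  -- gradient of p
  have hgrad : ∀ x : EuclideanSpace ℝ (Fin d),
      HasGradientAt (fun x => ∫ z, gaussDensity d t (x - α • z) ∂μ)
        (∫ z, (-(gaussDensity d t (x - α • z) / t) : ℝ) • (x - α • z) ∂μ) x := by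
    intro x
    rw [hasGradientAt_iff_hasFDerivAt]
    have hcomm := ContinuousLinearEquiv.integral_comp_comm
      (InnerProductSpace.toDual ℝ (EuclideanSpace ℝ (Fin d))).toContinuousLinearEquiv
      (fun z => (-(gaussDensity d t (x - α • z) / t) : ℝ) • (x - α • z)) (μ := μ)
    simp only [LinearIsometryEquiv.coe_toContinuousLinearEquiv] at hcomm
    rw [← hcomm]
    exact hderiv x
  -- gradient of log p
  have hlog : ∀ x : EuclideanSpace ℝ (Fin d),
      HasGradientAt (fun y => Real.log (∫ z, gaussDensity d t (y - α • z) ∂μ))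
        ((∫ z, gaussDensity d t (x - α • z) ∂μ)⁻¹ •
          ∫ z, (-(gaussDensity d t (x - α • z) / t) : ℝ) • (x - α • z) ∂μ) x := by
    intro x
    rw [hasGradientAt_iff_hasFDerivAt]
    have h := ((hgrad x).hasFDerivAt).log (hpos x).ne'
    simpa [_root_.map_smul] using h
  subst hp
  refine ⟨hpos, fun x => (hderiv x).differentiableAt, fun x => ?_⟩
  have hgval := (hlog x).gradient
  rw [show (fun y => Real.log ((fun x => ∫ z, gaussDensity d t (x - α • z) ∂μ) y))
      = (fun y => Real.log (∫ z, gaussDensity d t (y - α • z) ∂μ)) from rfl, hgval]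
  -- push Pperp ∘ ofEuc through everything
  set T : EuclideanSpace ℝ (Fin d) →L[ℝ] (Fin d → ℝ) :=
    LinearMap.toContinuousLinearMap
      ((Matrix.mulVecLin Pperp).comp (WithLp.linearEquiv 2 ℝ (Fin d → ℝ)).toLinearMap)
    with hTdef
  have hTv : ∀ v : EuclideanSpace ℝ (Fin d), T v = Pperp.mulVec (ofEuc v) := fun v => rfl
  have h1 : Pperp.mulVec (ofEuc (∫ z, (-(gaussDensity d t (x - α • z) / t) : ℝ) •
        (x - α • z) ∂μ))
      = ∫ z, Pperp.mulVec (ofEuc ((-(gaussDensity d t (x - α • z) / t) : ℝ) •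
        (x - α • z))) ∂μ := by
    rw [← hTv]
    rw [← T.integral_comp_comm (hgint x)]
    exact integral_congr_ae (Filter.Eventually.of_forall fun z => hTv _)
  have h2 : ∀ᵐ z ∂μ, Pperp.mulVec (ofEuc ((-(gaussDensity d t (x - α • z) / t) : ℝ) •
        (x - α • z)))
      = (-(gaussDensity d t (x - α • z) / t) : ℝ) •
        (Pperp.mulVec (ofEuc x) - α • b) := by
    filter_upwards [hsupp] with z hz
    simp only [ofEuc, WithLp.equiv_apply, WithLp.ofLp_smul, WithLp.ofLp_sub, Matrix.mulVec_smul,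
      Matrix.mulVec_sub]
    rw [show Pperp.mulVec (WithLp.ofLp z) = b from hz]
  have h3 : ∫ z, Pperp.mulVec (ofEuc ((-(gaussDensity d t (x - α • z) / t) : ℝ) •
        (x - α • z))) ∂μ
      = (∫ z, (-(gaussDensity d t (x - α • z) / t) : ℝ) ∂μ) •
        (Pperp.mulVec (ofEuc x) - α • b) := by
    rw [integral_congr_ae h2, integral_smul_const]
  have h4 : ∫ z, (-(gaussDensity d t (x - α • z) / t) : ℝ) ∂μ
      = -((∫ z, gaussDensity d t (x - α • z) ∂μ) / t) := by
    rw [integral_neg, integral_div]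
  have hofsmul : ∀ (r : ℝ) (v : EuclideanSpace ℝ (Fin d)),
      ofEuc (r • v) = r • ofEuc v := fun r v => rfl
  rw [hofsmul, Matrix.mulVec_smul, h1, h3, h4, smul_smul]
  have hP : (∫ z, gaussDensity d t (x - α • z) ∂μ) ≠ 0 := (hpos x).ne'
  have hmul : (∫ z, gaussDensity d t (x - α • z) ∂μ)⁻¹ *
      -((∫ z, gaussDensity d t (x - α • z) ∂μ) / t) = -t⁻¹ := by
    field_simp
  rw [hmul, neg_smul, ← smul_neg, neg_sub]
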